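/- arXiv:2503.07932 — 2 statements merged into one kernel-verified Lean document; each statement's English description precedes it below -/
import Mathlib

section
/- For any finite alphabet Σ, base class F, and T ≥ 1, the Natarajan dimension of the end-to-end class satisfies Ndim(F^{e2e(T)}) ≤ 9 · T · Ndim(F) · log₂(2·Ndim(F)·|Σ| / (e·ln 2)). -/
def applyAppend {σ : Type*} (f : List σ → σ) (x : List σ) : List σ := x ++ [f x]

def cot {σ : Type*} (f : List σ → σ) (T : ℕ) (x : List σ) : List σ :=
  (applyAppend f)^[T] x

def e2e {σ : Type*} [Inhabited σ] (f : List σ → σ) (T : ℕ) (x : List σ) : σ :=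
  (cot f T x).getLastD default

def e2eClass {σ : Type*} [Inhabited σ] (F : Set (List σ → σ)) (T : ℕ) :
    Set (List σ → σ) := (fun f => e2e f T) '' F

/-- Natarajan shattering of a set of `d` points by a class `H ⊆ Y^X`. -/
def NShatters {X Y : Type*} (H : Set (X → Y)) (d : ℕ) : Prop :=
  ∃ x : Fin d → X, ∃ g₀ g₁ : Fin d → Y,
    (∀ i, g₀ i ≠ g₁ i) ∧
    ∀ U : Fin d → Bool, ∃ h ∈ H, ∀ i, h (x i) = if U i then g₀ i else g₁ i

lemma nshatters_one {X Y : Type*} {H : Set (X → Y)} {f g : X → Y}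
    (hf : f ∈ H) (hg : g ∈ H) (hne : f ≠ g) : NShatters H 1 := by
  obtain ⟨p, hp⟩ := Function.ne_iff.mp hne
  refine ⟨fun _ => p, fun _ => f p, fun _ => g p, fun _ => hp, fun U => ?_⟩
  by_cases h0 : U 0
  · exact ⟨f, hf, fun i => by rw [Subsingleton.elim i 0, h0]; simp⟩
  · exact ⟨g, hg, fun i => by rw [Subsingleton.elim i 0]; simp [h0]⟩

lemma card_le_one_of_nshatters_zero {X Y : Type*} [DecidableEq (X → Y)]
    {A : Finset (X → Y)} (h : ∀ k, NShatters (↑A : Set (X → Y)) k → k ≤ 0) :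
    A.card ≤ 1 := by
  by_contra hc
  push_neg at hc
  obtain ⟨f, hf, g, hg, hne⟩ := Finset.one_lt_card.mp hc
  exact absurd (h 1 (nshatters_one (by exact_mod_cast hf) (by exact_mod_cast hg) hne))
    (by norm_num)

lemma pow_two_term (a b k : ℕ) : a^(k+1) + (k+1) * a^k * b ≤ (a+b)^(k+1) := by
  induction k with
  | zero => simpa using Nat.le_refl _
  | succ k ih =>
    have h1 : (a+b)^(k+2) = (a+b) * (a+b)^(k+1) := by ring
    have h2 : (a+b) * (a^(k+1) + (k+1) * a^k * b) ≤ (a+b) * (a+b)^(k+1) :=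
      Nat.mul_le_mul_left _ ih
    calc a^(k+2) + (k+2) * a^(k+1) * b
        ≤ (a+b) * (a^(k+1) + (k+1) * a^k * b) := by ring_nf; linarith [Nat.zero_le (a ^ k * k * b ^ 2), Nat.zero_le (a ^ k * b ^ 2)]
      _ ≤ (a+b)^(k+2) := by rw [h1]; exact h2

section Sauer
variable {α : Type u} {σ' : Type v}

lemma nshatters_restrict_lift {a' : α} [DecidableEq ({x : α // x ≠ a'} → σ')]
    {A : Finset (α → σ')} {k : ℕ}
    (h : NShatters (↑(A.image (fun f (b : {x : α // x ≠ a'}) => f b.1)) :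
      Set ({x : α // x ≠ a'} → σ')) k) :
    NShatters (↑A : Set (α → σ')) k := by
  obtain ⟨x, g₀, g₁, hne, hU⟩ := h
  refine ⟨fun j => (x j).1, g₀, g₁, hne, fun U => ?_⟩
  obtain ⟨h', hh', hpat⟩ := hU U
  obtain ⟨f, hf, rfl⟩ := Finset.mem_image.mp (by exact_mod_cast hh')
  exact ⟨f, by exact_mod_cast hf, fun j => hpat j⟩

lemma nshatters_pair_lift {A : Finset (α → σ')} {a' : α} {y₁ y₂ : σ'} (hy : y₁ ≠ y₂)
    {B : Set ({x : α // x ≠ a'} → σ')}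
    (hB : ∀ g' ∈ B,
      (∃ f ∈ A, (fun (b : {x : α // x ≠ a'}) => f b.1) = g' ∧ f a' = y₁) ∧
      (∃ f ∈ A, (fun (b : {x : α // x ≠ a'}) => f b.1) = g' ∧ f a' = y₂))
    {k : ℕ} (h : NShatters B k) : NShatters (↑A : Set (α → σ')) (k+1) := by
  obtain ⟨x, g₀, g₁, hne, hU⟩ := h
  refine ⟨Fin.snoc (fun j => (x j).1) a', Fin.snoc g₀ y₁, Fin.snoc g₁ y₂, ?_, fun U => ?_⟩
  · intro i
    refine Fin.lastCases ?_ (fun j => ?_) i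
    · simpa using hy
    · simpa using hne j
  · obtain ⟨g', hg', hpat⟩ := hU (fun j => U (Fin.castSucc j))
    obtain ⟨⟨f₁, hf₁, hrf₁, hfa₁⟩, ⟨f₂, hf₂, hrf₂, hfa₂⟩⟩ := hB g' hg'
    refine ⟨if U (Fin.last k) then f₁ else f₂, ?_, fun i => ?_⟩
    · by_cases hl : U (Fin.last k) <;> simp [hl, hf₁, hf₂]
    · refine Fin.lastCases ?_ (fun j => ?_) i
      · by_cases hl : U (Fin.last k) <;> simp [hl, Fin.snoc_last, hfa₁, hfa₂]
      · have hx : (Fin.snoc (fun j => (x j).1) a' : Fin (k+1) → α) (Fin.castSucc j)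
            = (x j).1 := by simp
        have key : ∀ f : α → σ', (fun (b : {x : α // x ≠ a'}) => f b.1) = g' →
            f (x j).1 = if U (Fin.castSucc j) then g₀ j else g₁ j := by
          intro f hrf
          have := hpat j
          rw [← hrf] at this
          exact this
        by_cases hl : U (Fin.last k) <;>
          simp only [hl, if_true, if_false, hx, Fin.snoc_castSucc] <;>
          [exact key f₁ hrf₁; exact key f₂ hrf₂]
end Sauer

lemma sauer_aux (σ' : Type v) [Fintype σ'] (hs : 1 ≤ Fintype.card σ') :
    ∀ (n N : ℕ) (α : Type u) (iα : Fintype α) (dα : DecidableEq α),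
      Fintype.card α = n →
      ∀ A : Finset (α → σ'), (∀ k, NShatters (↑A : Set (α → σ')) k → k ≤ N) →
        A.card ≤ ((n+1) * (Fintype.card σ')^2)^N := by
  intro n
  induction n with
  | zero =>
    intro N α iα dα hcard A hA
    have hem : IsEmpty α := Fintype.card_eq_zero_iff.mp hcard
    have h1 : A.card ≤ 1 :=
      Finset.card_le_one.mpr (fun f _ g _ => funext (fun x => (hem.false x).elim))
    refine h1.trans (Nat.one_le_pow _ _ ?_)
    have : 1 ≤ (Fintype.card σ')^2 := Nat.one_le_pow _ _ hs
    omega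
  | succ n ih =>
    intro N α iα dα hcard A hA
    classical
    cases N with
    | zero =>
      exact le_trans (card_le_one_of_nshatters_zero hA) (by norm_num)
    | succ N =>
      have hpos : 0 < Fintype.card α := by omega
      obtain ⟨a'⟩ := Fintype.card_pos_iff.mp hpos
      set β := {x : α // x ≠ a'} with hβdef
      have hβ : Fintype.card β = n := by
        have h1 : Fintype.card {x : α // x = a'} = 1 := Fintype.card_subtype_eq a'
        have h2 := Fintype.card_subtype_compl (fun x : α => x = a')
        rw [h1, hcard] at h2
        rw [show Fintype.card β = Fintype.card {x : α // ¬ x = a'} from rfl, h2]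
        omega
      set s := Fintype.card σ' with hsdef
      set r : (α → σ') → (β → σ') := fun f b => f b.1 with hrdef
      set A' : Finset (β → σ') := A.image r with hA'def
      -- fibers
      have hfib : A.card = ∑ g' ∈ A', (A.filter (fun f => r f = g')).card :=
        Finset.card_eq_sum_card_image r A
      have hfib_inj : ∀ g' ∈ A', ∀ f₁ ∈ A.filter (fun f => r f = g'),
          ∀ f₂ ∈ A.filter (fun f => r f = g'), f₁ a' = f₂ a' → f₁ = f₂ := by
        intro g' _ f₁ hf₁ f₂ hf₂ ha
        rw [Finset.mem_filter] at hf₁ hf₂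
        funext x
        by_cases hx : x = a'
        · rw [hx]; exact ha
        · have := congrFun (hf₁.2.trans hf₂.2.symm) ⟨x, hx⟩
          exact this
      -- fiber card = card of image of values at a'
      have hfibcard : ∀ g' ∈ A', (A.filter (fun f => r f = g')).card
          = ((A.filter (fun f => r f = g')).image (fun f => f a')).card := by
        intro g' hg'
        exact (Finset.card_image_of_injOn
          (fun f₁ hf₁ f₂ hf₂ h => hfib_inj g' hg' f₁ hf₁ f₂ hf₂ h)).symm
      set realized : (β → σ') → σ' × σ' → Prop := fun g' p =>
        (∃ f ∈ A, r f = g' ∧ f a' = p.1) ∧ (∃ f ∈ A, r f = g' ∧ f a' = p.2) with hreal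
      set Pairs : Finset (σ' × σ') := Finset.univ.filter (fun p => p.1 ≠ p.2) with hPairs
      -- step 2 : per-fiber excess bounded by realized pairs
      have hexcess : ∀ g' ∈ A', (A.filter (fun f => r f = g')).card - 1
          ≤ (Pairs.filter (fun p => realized g' p)).card := by
        intro g' hg'
        set fib := A.filter (fun f => r f = g') with hfibdef
        set V := fib.image (fun f => f a') with hV
        have hsub : V.offDiag ⊆ Pairs.filter (fun p => realized g' p) := by
          intro p hp
          rw [Finset.mem_offDiag] at hp
          obtain ⟨h1, h2, h3⟩ := hp
          obtain ⟨f₁, hf₁, he₁⟩ := Finset.mem_image.mp h1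
          obtain ⟨f₂, hf₂, he₂⟩ := Finset.mem_image.mp h2
          rw [Finset.mem_filter] at hf₁ hf₂
          refine Finset.mem_filter.mpr ⟨Finset.mem_filter.mpr ⟨Finset.mem_univ _, h3⟩, ?_⟩
          exact ⟨⟨f₁, hf₁.1, hf₁.2, he₁⟩, ⟨f₂, hf₂.1, hf₂.2, he₂⟩⟩
        have hoff : V.offDiag.card = V.card * V.card - V.card := Finset.offDiag_card V
        have hVc : fib.card = V.card := hfibcard g' hg'
        have : fib.card - 1 ≤ V.offDiag.card := by
          rcases Nat.lt_or_ge V.card 2 with h | h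
          · omega
          · have h2 : 2 * V.card ≤ V.card * V.card := Nat.mul_le_mul_right _ h
            omega
        exact this.trans (Finset.card_le_card hsub)
      -- step 1 : total count
      have hcount : A.card ≤ A'.card + ∑ g' ∈ A', ((A.filter (fun f => r f = g')).card - 1) := by
        rw [hfib]
        have hone : ∀ g' ∈ A', 1 ≤ (A.filter (fun f => r f = g')).card := by
          intro g' hg'
          obtain ⟨f, hf, hrf⟩ := Finset.mem_image.mp hg'
          exact Finset.card_pos.mpr ⟨f, Finset.mem_filter.mpr ⟨hf, hrf⟩⟩
        calc ∑ g' ∈ A', (A.filter (fun f => r f = g')).card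
            ≤ ∑ g' ∈ A', (1 + ((A.filter (fun f => r f = g')).card - 1)) :=
              Finset.sum_le_sum (fun g' hg' => by have := hone g' hg'; omega)
          _ = A'.card + ∑ g' ∈ A', ((A.filter (fun f => r f = g')).card - 1) := by
              rw [Finset.sum_add_distrib, Finset.sum_const, smul_eq_mul, mul_one]
      -- step 3 : swap sums
      have hswap : ∑ g' ∈ A', (Pairs.filter (fun p => realized g' p)).card
          = ∑ p ∈ Pairs, (A'.filter (fun g' => realized g' p)).card := by
        simp only [Finset.card_filter]
        exact Finset.sum_comm
      -- step 4a : bound for A'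
      have hA'bound : A'.card ≤ ((n+1) * s^2)^(N+1) := by
        refine ih (N+1) β inferInstance inferInstance hβ A' (fun k hk => hA k ?_)
        exact nshatters_restrict_lift hk
      -- step 4b : bound for each pair class
      have hpairbound : ∀ p ∈ Pairs,
          (A'.filter (fun g' => realized g' p)).card ≤ ((n+1) * s^2)^N := by
        intro p hp
        have hpne : p.1 ≠ p.2 := (Finset.mem_filter.mp hp).2
        refine ih N β inferInstance inferInstance hβ _ (fun k hk => ?_)
        have hk1 : NShatters (↑A : Set (α → σ')) (k+1) := by
          refine nshatters_pair_lift hpne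
            (B := (↑(A'.filter (fun g' => realized g' p)) : Set (β → σ'))) ?_ hk
          intro g' hg'
          have hm := Finset.mem_filter.mp (by exact_mod_cast hg' :
            g' ∈ A'.filter (fun g' => realized g' p))
          exact ⟨hm.2.1, hm.2.2⟩
        have := hA (k+1) hk1
        omega
      have hPairscard : Pairs.card ≤ s^2 := by
        have h1 : Pairs.card ≤ Fintype.card (σ' × σ') := by
          rw [← Finset.card_univ]; exact Finset.card_filter_le _ _
        rw [Fintype.card_prod] at h1
        calc Pairs.card ≤ Fintype.card σ' * Fintype.card σ' := h1
          _ = s^2 := by rw [pow_two]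
      -- assembly
      calc A.card
          ≤ A'.card + ∑ g' ∈ A', ((A.filter (fun f => r f = g')).card - 1) := hcount
        _ ≤ A'.card + ∑ g' ∈ A', (Pairs.filter (fun p => realized g' p)).card :=
            Nat.add_le_add_left (Finset.sum_le_sum hexcess) _
        _ = A'.card + ∑ p ∈ Pairs, (A'.filter (fun g' => realized g' p)).card := by rw [hswap]
        _ ≤ ((n+1) * s^2)^(N+1) + ∑ p ∈ Pairs, ((n+1) * s^2)^N :=
            Nat.add_le_add hA'bound (Finset.sum_le_sum hpairbound)
        _ = ((n+1) * s^2)^(N+1) + Pairs.card * ((n+1) * s^2)^N := by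
            rw [Finset.sum_const, smul_eq_mul]
        _ ≤ ((n+1) * s^2)^(N+1) + s^2 * ((n+1) * s^2)^N :=
            Nat.add_le_add_left (Nat.mul_le_mul_right _ hPairscard) _
        _ ≤ ((n+1) * s^2 + s^2)^(N+1) := by
            refine le_trans ?_ (pow_two_term ((n+1) * s^2) (s^2) N)
            have h3 : s^2 * ((n+1) * s^2)^N ≤ (N+1) * ((n+1) * s^2)^N * s^2 := by
              nlinarith [Nat.zero_le (((n+1) * s^2)^N * s^2 * N)]
            omega
        _ = ((n+1+1) * s^2)^(N+1) := by ring_nf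

section PartII
variable {σ : Type v} [Inhabited σ]

lemma cot_succ (f : List σ → σ) (t : ℕ) (y : List σ) :
    cot f (t+1) y = cot f t y ++ [f (cot f t y)] := by
  show (applyAppend f)^[t+1] y = _
  rw [Function.iterate_succ_apply']
  rfl

lemma cot_exists_append (f : List σ → σ) (t : ℕ) (y : List σ) :
    ∃ l : List σ, cot f t y = y ++ l ∧ l.length = t := by
  induction t with
  | zero => exact ⟨[], by simp [cot], rfl⟩
  | succ t ih =>
    obtain ⟨l, hl, hlen⟩ := ih
    refine ⟨l ++ [f (cot f t y)], ?_, by simp [hlen]⟩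
    rw [cot_succ, hl, List.append_assoc]

lemma agree_cot (T : ℕ) {d : ℕ} (x : Fin d → List σ) (f f' : List σ → σ)
    (hp : ∀ p : Fin d × Fin T × (Fin T → σ),
      f (x p.1 ++ (List.ofFn p.2.2).take p.2.1) = f' (x p.1 ++ (List.ofFn p.2.2).take p.2.1))
    (i : Fin d) : ∀ t, t ≤ T → cot f t (x i) = cot f' t (x i) := by
  intro t
  induction t with
  | zero => intro _; rfl
  | succ t ih =>
    intro ht
    have htT : t ≤ T := Nat.le_of_succ_le ht
    have hz := ih htT
    obtain ⟨l, hl, hlen⟩ := cot_exists_append f t (x i)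
    have hlt : t < T := ht
    have hval : f (cot f t (x i)) = f' (cot f t (x i)) := by
      set w : Fin T → σ := fun j => l.getD j default with hw
      have hlist : (List.ofFn w).take t = l := by
        apply List.ext_getElem
        · simp [hlen]; omega
        · intro k h1 h2
          have hkt : k < t := by simpa [hlen] using h2
          have hkT : k < T := lt_of_lt_of_le hkt htT
          rw [List.getElem_take, List.getElem_ofFn]
          simp only [hw]
          rw [List.getD_eq_getElem l default (by omega : k < l.length)]
      have h3 := hp (i, ⟨t, hlt⟩, w)
      simp only at h3
      rw [hlist, ← hl] at h3
      exact h3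
    rw [cot_succ, cot_succ, ← hz, ← hval]

lemma count_of_shatters {σ : Type v} [Fintype σ] [Inhabited σ]
    (F : Set (List σ → σ)) (N T d : ℕ)
    (hNmax : ∀ k, NShatters F k → k ≤ N)
    (hsh : NShatters (e2eClass F T) d) :
    2^d ≤ ((Fintype.card (Fin d × Fin T × (Fin T → σ)) + 1) * (Fintype.card σ)^2)^N := by
  classical
  obtain ⟨x, g₀, g₁, hne, hU⟩ := hsh
  have hchoice : ∀ U : Fin d → Bool, ∃ f, f ∈ F ∧
      ∀ i, e2e f T (x i) = if U i then g₀ i else g₁ i := by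
    intro U
    obtain ⟨h, hh, hpat⟩ := hU U
    obtain ⟨f, hf, rfl⟩ := hh
    exact ⟨f, hf, hpat⟩
  choose fU hfUF hfUpat using hchoice
  set D := Fin d × Fin T × (Fin T → σ) with hD
  set pt : D → List σ := fun p => x p.1 ++ (List.ofFn p.2.2).take p.2.1 with hpt
  set emb : (List σ → σ) → (D → σ) := fun f p => f (pt p) with hemb
  set A : Finset (D → σ) := Finset.univ.filter (fun g => ∃ f ∈ F, emb f = g) with hA
  -- injection from patterns into A
  have hinj : Set.InjOn (fun U => emb (fU U)) (Finset.univ : Finset (Fin d → Bool)) := by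
    intro U _ U' _ heq
    have hagree : ∀ p : D, (fU U) (pt p) = (fU U') (pt p) := fun p => congrFun heq p
    funext i
    have hcot : cot (fU U) T (x i) = cot (fU U') T (x i) :=
      agree_cot T x (fU U) (fU U') (fun p => hagree p) i T (le_refl T)
    have he2e : e2e (fU U) T (x i) = e2e (fU U') T (x i) := by
      unfold e2e; rw [hcot]
    rw [hfUpat U i, hfUpat U' i] at he2e
    by_cases h1 : U i <;> by_cases h2 : U' i <;>
      simp [h1, h2] at he2e ⊢ <;> [exact (hne i he2e).elim; exact (hne i he2e.symm).elim]
  have hmaps : ∀ U : Fin d → Bool, U ∈ (Finset.univ : Finset (Fin d → Bool)) →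
      emb (fU U) ∈ A := by
    intro U _
    exact Finset.mem_filter.mpr ⟨Finset.mem_univ _, ⟨fU U, hfUF U, rfl⟩⟩
  have hcard1 : 2^d ≤ A.card := by
    have := Finset.card_le_card_of_injOn (fun U => emb (fU U)) hmaps hinj
    simpa using this
  -- shattering transfer
  have htransfer : ∀ k, NShatters (↑A : Set (D → σ)) k → k ≤ N := by
    intro k hk
    obtain ⟨pp, G₀, G₁, hne', hU'⟩ := hk
    refine hNmax k ⟨fun j => pt (pp j), G₀, G₁, hne', fun U => ?_⟩
    obtain ⟨h, hh, hpat⟩ := hU' U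
    obtain ⟨f, hf, rfl⟩ := (Finset.mem_filter.mp (by exact_mod_cast hh)).2
    exact ⟨f, hf, fun j => hpat j⟩
  have hs1 : 1 ≤ Fintype.card σ := Fintype.card_pos
  have := sauer_aux σ hs1 (Fintype.card D) N D inferInstance inferInstance rfl A htransfer
  exact hcard1.trans this
end PartII

section Arith
open Real

lemma log_ge_one_sub_inv {y : ℝ} (hy : 0 < y) : 1 - 1/y ≤ Real.log y := by
  have h := Real.log_le_sub_one_of_pos (show 0 < 1/y by positivity)
  rw [Real.log_div one_ne_zero (ne_of_gt hy), Real.log_one] at h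
  linarith

lemma log_le_div_e {y : ℝ} (hy : 0 < y) : Real.log y ≤ y / Real.exp 1 := by
  have he : (0:ℝ) < Real.exp 1 := Real.exp_pos 1
  have h1 := Real.log_le_sub_one_of_pos (show 0 < y / Real.exp 1 by positivity)
  rw [Real.log_div (ne_of_gt hy) (ne_of_gt he), Real.log_exp] at h1
  linarith

-- bounds for -log (log 2) = log (1 / log 2)
lemma log_inv_log_two_ub : Real.log (1 / Real.log 2) ≤ 0.3671 := by
  have hl2 : (0.6931471803:ℝ) < Real.log 2 := Real.log_two_gt_d9
  have h1 : (1:ℝ) / Real.log 2 ≤ 1.4428 := by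
    rw [div_le_iff₀ (by linarith)]
    nlinarith
  have h2 : Real.log (1 / Real.log 2) ≤ Real.log 1.4428 :=
    Real.log_le_log (by positivity) h1
  have h3 : Real.log ((1.4428:ℝ)^2) = 2 * Real.log 1.4428 := by
    rw [Real.log_pow]; norm_num
  have h4 : ((1.4428:ℝ)^2) = 2 * 1.04083592 := by norm_num
  have h5 : Real.log ((1.4428:ℝ)^2) = Real.log 2 + Real.log 1.04083592 := by
    rw [h4, Real.log_mul (by norm_num) (by norm_num)]
  have h6 : Real.log (1.04083592:ℝ) ≤ 0.04083592 := by
    have := Real.log_le_sub_one_of_pos (show (0:ℝ) < 1.04083592 by norm_num)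
    linarith
  have hl2' : Real.log 2 < 0.6931471808 := Real.log_two_lt_d9
  linarith

lemma log_inv_log_two_lb : (0.3659:ℝ) ≤ Real.log (1 / Real.log 2) := by
  have hl2 : Real.log 2 < 0.6931471808 := Real.log_two_lt_d9
  have hl2' : (0.6931471803:ℝ) < Real.log 2 := Real.log_two_gt_d9
  have h1 : (1.4425:ℝ) ≤ 1 / Real.log 2 := by
    rw [le_div_iff₀ (by linarith)]
    nlinarith
  have h2 : Real.log (1.4425:ℝ) ≤ Real.log (1 / Real.log 2) :=
    Real.log_le_log (by norm_num) h1
  have h3 : Real.log ((1.4425:ℝ)^2) = 2 * Real.log 1.4425 := by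
    rw [Real.log_pow]; norm_num
  have h4 : ((1.4425:ℝ)^2) = 2 * 1.040403125 := by norm_num
  have h5 : Real.log ((1.4425:ℝ)^2) = Real.log 2 + Real.log 1.040403125 := by
    rw [h4, Real.log_mul (by norm_num) (by norm_num)]
  have h6 : (0.038834:ℝ) ≤ Real.log 1.040403125 := by
    have := log_ge_one_sub_inv (show (0:ℝ) < 1.040403125 by norm_num)
    have hx : (1:ℝ)/1.040403125 ≤ 0.961167 := by
      rw [div_le_iff₀ (by norm_num)]; norm_num
    linarith
  linarith

end Arith

lemma key_ineq (t l l2 lt ls lD0 : ℝ) (ht : 1 ≤ t) (hl : 0.7521 ≤ l)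
    (hl2 : l2 ≤ 0.6931471808) (hlt : lt ≤ 0.36788 * t) (hls : ls ≤ l - 0.0590)
    (hD0 : lD0 ≤ 2.2045 + 0.36788 * t + (l - 0.7521) + 0.36788 * l + 0.3671) :
    l2 + lt + (t + 2) * ls + lD0 ≤ 9 * t * l := by
  have h1 : (t + 2) * ls ≤ (t + 2) * (l - 0.0590) :=
    mul_le_mul_of_nonneg_left hls (by linarith)
  nlinarith [mul_nonneg (show (0:ℝ) ≤ l - 0.7521 by linarith)
    (show (0:ℝ) ≤ 8 * t - 3.36788 by linarith)]

lemma final_step (dR D0 l2 nR tR l : ℝ)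
    (hfinD : dR*l2*D0 ≤ D0*l2*D0 + nR*dR - nR*D0)
    (hl : 0.7521 ≤ l) (ht : 1 ≤ tR) (hn : 0 < nR)
    (hD0l2 : D0 * l2 = 9*tR*nR*l) (hcon : D0 < dR) : False := by
  have hl0 : (0:ℝ) ≤ l := by linarith
  have htl : l ≤ tR * l := by nlinarith
  have h1 : nR < D0 * l2 := by rw [hD0l2]; nlinarith
  nlinarith [mul_pos (sub_pos.mpr hcon) (sub_pos.mpr h1)]

set_option maxHeartbeats 1000000 in
lemma arith_main (s N T d : ℕ) (hs : 2 ≤ s) (hN : 1 ≤ N) (hT : 1 ≤ T) (hd : 1 ≤ d)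
    (hcount : 2^d ≤ ((d * (T * s^T) + 1) * s^2)^N) :
    (d:ℝ) ≤ 9 * T * N * Real.logb 2 (2 * N * s / (Real.exp 1 * Real.log 2)) := by
  have hl2a : (0.6931471803:ℝ) < Real.log 2 := Real.log_two_gt_d9
  have hl2b : Real.log 2 < 0.6931471808 := Real.log_two_lt_d9
  have hea : (2.7182818283:ℝ) < Real.exp 1 := Real.exp_one_gt_d9
  have hl2pos : (0:ℝ) < Real.log 2 := by linarith
  set l2 := Real.log 2 with hl2def
  set sR := (s:ℝ) with hsR
  set nR := (N:ℝ) with hnR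
  set tR := (T:ℝ) with htR
  set dR := (d:ℝ) with hdR
  have hsR2 : (2:ℝ) ≤ sR := by rw [hsR]; exact_mod_cast hs
  have hnR1 : (1:ℝ) ≤ nR := by rw [hnR]; exact_mod_cast hN
  have htR1 : (1:ℝ) ≤ tR := by rw [htR]; exact_mod_cast hT
  have hdR1 : (1:ℝ) ≤ dR := by rw [hdR]; exact_mod_cast hd
  have hspos : (0:ℝ) < sR := by linarith
  have hnpos : (0:ℝ) < nR := by linarith
  have htpos : (0:ℝ) < tR := by linarith
  have hdpos : (0:ℝ) < dR := by linarith
  -- log of Λ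
  have hΛpos : (0:ℝ) < 2 * nR * sR / (Real.exp 1 * l2) := by positivity
  set l := Real.log (2 * nR * sR / (Real.exp 1 * l2)) with hldef
  have hlid : l = l2 + Real.log nR + Real.log sR - 1 - Real.log l2 := by
    rw [hldef, Real.log_div (by positivity) (by positivity),
      Real.log_mul (by positivity) (ne_of_gt hspos),
      Real.log_mul (by norm_num) (ne_of_gt hnpos),
      Real.log_mul (by positivity) (ne_of_gt hl2pos), Real.log_exp]
    ring
  have hmlog2_ub : -Real.log l2 ≤ 0.3671 := by
    have := log_inv_log_two_ub
    rwa [one_div, Real.log_inv] at this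
  have hmlog2_lb : (0.3659:ℝ) ≤ -Real.log l2 := by
    have := log_inv_log_two_lb
    rwa [one_div, Real.log_inv] at this
  have hlogs_lb : l2 ≤ Real.log sR := Real.log_le_log (by norm_num) hsR2
  have hlogn_nn : (0:ℝ) ≤ Real.log nR := Real.log_nonneg hnR1
  have hlogt_nn : (0:ℝ) ≤ Real.log tR := Real.log_nonneg htR1
  have hlpos : (0.7521:ℝ) ≤ l := by rw [hlid]; linarith
  -- main counting inequality in ℝ
  have hcountR : (2:ℝ)^d ≤ ((dR * (tR * sR^T) + 1) * sR^2)^N := by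
    have := hcount
    have h2 : ((2^d : ℕ):ℝ) ≤ ((((d * (T * s^T) + 1) * s^2)^N : ℕ):ℝ) := by exact_mod_cast this
    push_cast at h2
    exact h2
  have hbase_pos : (0:ℝ) < (dR * (tR * sR^T) + 1) * sR^2 := by positivity
  have hmain0 : dR * l2 ≤ nR * Real.log ((dR * (tR * sR^T) + 1) * sR^2) := by
    have h1 := Real.log_le_log (by positivity) hcountR
    rw [Real.log_pow, Real.log_pow] at h1
    exact_mod_cast h1
  have hsT1 : (1:ℝ) ≤ sR^T := one_le_pow₀ (by linarith)
  have hts1 : (1:ℝ) ≤ tR * sR^T := by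
    have := mul_le_mul htR1 hsT1 (by norm_num) (by linarith)
    linarith
  have hm1 : (1:ℝ) ≤ dR * (tR * sR^T) := by
    have := mul_le_mul hdR1 hts1 (by norm_num) (by linarith)
    linarith
  -- expand the log of the counting bound
  have hlog_inner : Real.log ((dR * (tR * sR^T) + 1) * sR^2)
      ≤ l2 + Real.log dR + Real.log tR + (tR + 2) * Real.log sR := by
    have hmono : (dR * (tR * sR^T) + 1) * sR^2 ≤ 2 * (dR * (tR * (sR^T * sR^2))) := by
      have h0 : (dR * (tR * sR^T) + 1) ≤ 2 * (dR * (tR * sR^T)) := by linarith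
      have h1 := mul_le_mul_of_nonneg_right h0 (sq_nonneg sR)
      calc (dR * (tR * sR^T) + 1) * sR^2 ≤ 2 * (dR * (tR * sR^T)) * sR^2 := h1
        _ = 2 * (dR * (tR * (sR^T * sR^2))) := by ring
    have h1 : Real.log ((dR * (tR * sR^T) + 1) * sR^2)
        ≤ Real.log (2 * (dR * (tR * (sR^T * sR^2)))) := Real.log_le_log hbase_pos hmono
    have h3 : Real.log (2 * (dR * (tR * (sR^T * sR^2))))
        = l2 + (Real.log dR + (Real.log tR + ((T:ℝ) * Real.log sR + 2 * Real.log sR))) := by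
      rw [Real.log_mul (by norm_num) (by positivity),
          Real.log_mul (by positivity) (by positivity),
          Real.log_mul (by positivity) (by positivity),
          Real.log_mul (by positivity) (by positivity),
          Real.log_pow, Real.log_pow]
      norm_num
      exact hl2def.symm
    rw [h3] at h1
    have : (T:ℝ) = tR := rfl
    rw [this] at h1
    linarith
  have hmain : dR * l2 ≤ nR * (l2 + Real.log dR + Real.log tR + (tR + 2) * Real.log sR) :=
    hmain0.trans (mul_le_mul_of_nonneg_left hlog_inner (le_of_lt hnpos))
  -- define D0
  set L := l / l2 with hLdef
  set D0 := 9 * tR * nR * L with hD0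
  have hLpos : (0:ℝ) < L := div_pos (by linarith) hl2pos
  have hD0pos : (0:ℝ) < D0 := by positivity
  have hD0l2 : D0 * l2 = 9 * tR * nR * l := by
    rw [hD0, hLdef]; field_simp
  -- bound log d
  have hlogd : Real.log dR ≤ Real.log D0 + (dR / D0 - 1) := by
    have h1 := Real.log_le_sub_one_of_pos (show (0:ℝ) < dR / D0 by positivity)
    rw [Real.log_div (ne_of_gt hdpos) (ne_of_gt hD0pos)] at h1
    linarith
  -- bound log D0
  have hinv_e : (1:ℝ) / Real.exp 1 ≤ 0.36788 := by
    rw [div_le_iff₀ (Real.exp_pos 1)]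
    nlinarith
  have hlogt_ub : Real.log tR ≤ 0.36788 * tR := by
    have h1 := log_le_div_e htpos
    rw [div_eq_mul_one_div] at h1
    nlinarith [mul_le_mul_of_nonneg_left hinv_e (le_of_lt htpos)]
  have hlogl_ub : Real.log l ≤ 0.36788 * l := by
    have hlp : (0:ℝ) < l := by linarith
    have h1 := log_le_div_e hlp
    rw [div_eq_mul_one_div] at h1
    nlinarith [mul_le_mul_of_nonneg_left hinv_e (le_of_lt hlp)]
  have hlog9 : Real.log (9:ℝ) ≤ 2.2045 := by
    have h9 : (9:ℝ) = 2^3 * 1.125 := by norm_num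
    have h1 : Real.log (9:ℝ) = 3 * l2 + Real.log 1.125 := by
      rw [h9, Real.log_mul (by norm_num) (by norm_num), Real.log_pow]; norm_num; exact hl2def.symm
    have h2 : Real.log (1.125:ℝ) ≤ 0.125 := by
      have := Real.log_le_sub_one_of_pos (show (0:ℝ) < 1.125 by norm_num)
      linarith
    rw [h1]; linarith
  have hlogD0id : Real.log D0 = Real.log 9 + Real.log tR + Real.log nR
      + Real.log l - Real.log l2 := by
    rw [hD0, hLdef,
      Real.log_mul (by positivity) (by positivity),
      Real.log_mul (by positivity) (ne_of_gt hnpos),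
      Real.log_mul (by norm_num) (ne_of_gt htpos),
      Real.log_div (by positivity) (ne_of_gt hl2pos)]
    ring
  have hlogn_ub : Real.log nR ≤ l - 0.7521 := by
    rw [hlid] at *; linarith
  have hlogs_ub : Real.log sR ≤ l - 0.0590 := by linarith [hlid]
  have hlogD0_ub : Real.log D0 ≤ 2.2045 + 0.36788 * tR + (l - 0.7521) + 0.36788 * l + 0.3671 := by
    rw [hlogD0id]; linarith
  -- the key inequality
  have hKEY : l2 + Real.log tR + (tR + 2) * Real.log sR + Real.log D0 ≤ 9 * tR * l :=
    key_ineq tR l l2 (Real.log tR) (Real.log sR) (Real.log D0) htR1 hlpos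
      (le_of_lt hl2b) hlogt_ub hlogs_ub hlogD0_ub
  -- combine
  have hfin : dR * l2 ≤ D0 * l2 + nR * (dR / D0) - nR := by
    have h1 : dR * l2 ≤ nR * (l2 + Real.log tR + (tR + 2) * Real.log sR + Real.log D0)
        + nR * (dR / D0 - 1) := by
      have h2 := mul_le_mul_of_nonneg_left hlogd (le_of_lt hnpos)
      linarith [hmain, h2]
    have h3 := mul_le_mul_of_nonneg_left hKEY (le_of_lt hnpos)
    rw [hD0l2]
    linarith
  -- conclude d ≤ D0
  have hdle : dR ≤ D0 := by
    by_contra hcon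
    push_neg at hcon
    have hmul := mul_le_mul_of_nonneg_right hfin (le_of_lt hD0pos)
    have hdiv : nR * (dR / D0) * D0 = nR * dR := by field_simp
    rw [add_sub_assoc] at hmul
    have hexp : (D0 * l2 + (nR * (dR / D0) - nR)) * D0
        = D0 * l2 * D0 + nR * dR - nR * D0 := by
      rw [add_mul, sub_mul, hdiv]; ring
    rw [hexp] at hmul
    exact final_step dR D0 l2 nR tR l hmul hlpos htR1 hnpos hD0l2 hcon
  -- rewrite goal
  have hgoal : 9 * tR * nR * Real.logb 2 (2 * nR * sR / (Real.exp 1 * l2)) = D0 := by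
    rw [hD0, hLdef, Real.logb, hldef]
  calc dR ≤ D0 := hdle
    _ = _ := hgoal.symm

/-- for any finite alphabet `σ`, base class `F` with finite
Natarajan dimension `N`, and `T ≥ 1`, the Natarajan dimension of the
end-to-end class satisfies `Ndim(F^{e2e(T)}) ≤ 9·T·N·log₂(2·N·|σ|/(e·ln 2))`. -/
theorem ndim_e2eClass_le {σ : Type*} [Fintype σ] [Inhabited σ]
    (F : Set (List σ → σ)) (N T : ℕ) (hT : 1 ≤ T)
    (hN : NShatters F N) (hNmax : ∀ d, NShatters F d → d ≤ N) :
    ∀ d, NShatters (e2eClass F T) d →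
      (d : ℝ) ≤ 9 * T * N *
        Real.logb 2 (2 * N * (Fintype.card σ) / (Real.exp 1 * Real.log 2)) := by
  intro d hsh
  rcases Nat.eq_zero_or_pos d with rfl | hd
  · -- d = 0 : RHS is nonnegative
    rcases Nat.eq_zero_or_pos N with rfl | hN1
    · simp
    · have hscard : (1:ℝ) ≤ (Fintype.card σ : ℝ) := by
        exact_mod_cast Nat.one_le_iff_ne_zero.mpr (Nat.pos_iff_ne_zero.mp Fintype.card_pos)
      have hNR : (1:ℝ) ≤ (N:ℝ) := by exact_mod_cast hN1
      have he : Real.exp 1 < 2.7182818286 := Real.exp_one_lt_d9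
      have hl2 : Real.log 2 < 0.6931471808 := Real.log_two_lt_d9
      have hl2p : (0:ℝ) < Real.log 2 := Real.log_pos (by norm_num)
      have hep : (0:ℝ) < Real.exp 1 := Real.exp_pos 1
      have hΛ : (1:ℝ) ≤ 2 * N * (Fintype.card σ) / (Real.exp 1 * Real.log 2) := by
        rw [le_div_iff₀ (by positivity)]
        nlinarith
      have hlogb : (0:ℝ) ≤ Real.logb 2 (2 * N * (Fintype.card σ) / (Real.exp 1 * Real.log 2)) :=
        Real.logb_nonneg (by norm_num) hΛ
      have : (0:ℝ) ≤ 9 * T * N * Real.logb 2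
          (2 * N * (Fintype.card σ) / (Real.exp 1 * Real.log 2)) := by positivity
      simpa using this
  · -- d ≥ 1
    obtain ⟨x, g₀, g₁, hne, hU⟩ := hsh
    have hsh' : NShatters (e2eClass F T) d := ⟨x, g₀, g₁, hne, hU⟩
    set i0 : Fin d := ⟨0, hd⟩ with hi0
    -- alphabet has at least two elements
    have hs2 : 2 ≤ Fintype.card σ :=
      Fintype.one_lt_card_iff_nontrivial.mpr ⟨⟨g₀ i0, g₁ i0, hne i0⟩⟩
    -- N ≥ 1
    have hN1 : 1 ≤ N := by
      obtain ⟨h₁, hh₁, hpat₁⟩ := hU (fun _ => true)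
      obtain ⟨h₀, hh₀, hpat₀⟩ := hU (fun _ => false)
      obtain ⟨f₁, hf₁, rfl⟩ := hh₁
      obtain ⟨f₀, hf₀, rfl⟩ := hh₀
      have hne' : f₁ ≠ f₀ := by
        intro hEq
        have h1 := hpat₁ i0
        have h0 := hpat₀ i0
        rw [hEq] at h1
        simp only [if_true, if_false] at h1 h0
        exact hne i0 (h1.symm.trans h0 : g₀ i0 = g₁ i0)
      exact hNmax 1 (nshatters_one hf₁ hf₀ hne')
    have hcount := count_of_shatters F N T d hNmax hsh'
    have hcard : Fintype.card (Fin d × Fin T × (Fin T → σ))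
        = d * (T * (Fintype.card σ)^T) := by
      simp [Fintype.card_fun]
    rw [hcard] at hcount
    exact arith_main (Fintype.card σ) N T d hs2 hN1 hT hd hcount
end

section
/- For every Turing machine transition rule τ on state set [S] and tape alphabet {0,1,⊔}, and every input ω ∈ {0,1}*, the autoregressive generator f_τ (which at each step decodes the computation history encoded in its input string, computes the current head position as the running sum of past moves, retrieves the most recently written symbol at that position—or ⊔ if none—and applies τ) satisfies: iterating f_τ for T steps starting from the preprocessed prompt Pre(ω) produces at step t exactly the token (s_t, a_t, b_t) recording the machine's state, written symbol, and head move at step t of the run of the machine ⟨S,T,τ⟩ on ω. In particular, the symbol component of the final token equals the machine's output g_{⟨S,T,τ⟩}(ω). -/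
/-- Tokens: (state, tape symbol, head move); `none` is the blank symbol `⊔`. -/
abbrev Tok (S : ℕ) := Fin S × Option Bool × ℤ

/-- A machine configuration: (tape, head position, internal state). -/
abbrev Config (S : ℕ) := (ℤ → Option Bool) × ℤ × Fin S

/-- Initial tape: input `ω` on cells `1..|ω|`, blank elsewhere. -/
def initTape (ω : List Bool) : ℤ → Option Bool := fun p =>
  if 1 ≤ p ∧ p ≤ ω.length then some (ω.getD (p - 1).toNat false) else none

/-- One Turing machine step: read, transition, write, move. -/
def tmStep {S : ℕ} (τ : Fin S × Option Bool → Fin S × Bool × ℤ)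
    (c : Config S) : Config S :=
  let r := c.1 c.2.1
  let t := τ (c.2.2, r)
  (Function.update c.1 c.2.1 (some t.2.1), c.2.1 + t.2.2, t.1)

/-- Configuration after `t` steps on input `ω`: head starts at `|ω|+1`, state `1`
(encoded as `0 : Fin S`). -/
def tmRun {S : ℕ} [NeZero S] (τ : Fin S × Option Bool → Fin S × Bool × ℤ)
    (ω : List Bool) (t : ℕ) : Config S :=
  (tmStep τ)^[t] (initTape ω, ((ω.length : ℤ) + 1, (0 : Fin S)))

/-- The triple `(s_{t+1}, a_{t+1}, b_{t+1})` produced at step `t+1` of the run. -/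
def tmEmit {S : ℕ} [NeZero S] (τ : Fin S × Option Bool → Fin S × Bool × ℤ)
    (ω : List Bool) (t : ℕ) : Fin S × Bool × ℤ :=
  let c := tmRun τ ω t
  τ (c.2.2, c.1 c.2.1)

def toTok {S : ℕ} (p : Fin S × Bool × ℤ) : Tok S := (p.1, some p.2.1, p.2.2)

/-- `pos i`: head position at which the symbol of token `i` was written
(running sum of the moves of the earlier tokens). -/
def pos {S : ℕ} (z : List (Tok S)) (i : ℕ) : ℤ :=
  ((z.take i).map (fun t => t.2.2)).sum

/-- Final head position: sum of all moves. -/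
def npos {S : ℕ} (z : List (Tok S)) : ℤ := (z.map (fun t => t.2.2)).sum

/-- Symbol read at the current head position: the most recently written symbol
there, or blank if that cell was never written. -/
def readSym {S : ℕ} [NeZero S] (z : List (Tok S)) : Option Bool :=
  let s := (Finset.range z.length).filter (fun i => pos z i = npos z)
  if h : s.Nonempty then (z.getD (s.max' h) default).2.1 else none

/-- The autoregressive generator `f_τ`: decode the computation history, read the
tape, and apply the transition rule `τ`. -/
def fTau {S : ℕ} [NeZero S] (τ : Fin S × Option Bool → Fin S × Bool × ℤ)
    (z : List (Tok S)) : Tok S :=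
  toTok (τ ((z.getLastD default).1, readSym z))

/-- Preprocessing: a beginning-of-sequence token `(1, ⊔, +1)` followed by tokens
`(1, ω[i], +1)`. -/
def pre {S : ℕ} [NeZero S] (ω : List Bool) : List (Tok S) :=
  ((0 : Fin S), (none : Option Bool), (1 : ℤ)) ::
    ω.map (fun b => ((0 : Fin S), some b, (1 : ℤ)))

section Aux
set_option linter.unusedSectionVars false

variable {S : ℕ} [NeZero S]

/-- Tape decoded from a token history: most recently written symbol at `p`. -/
def tapeOf (z : List (Tok S)) (p : ℤ) : Option Bool :=
  let s := (Finset.range z.length).filter (fun i => pos z i = p)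
  if h : s.Nonempty then (z.getD (s.max' h) default).2.1 else none

lemma readSym_eq (z : List (Tok S)) : readSym z = tapeOf z (npos z) := rfl

lemma pos_append_le (z w : List (Tok S)) {i : ℕ} (h : i ≤ z.length) :
    pos (z ++ w) i = pos z i := by
  unfold pos; rw [List.take_append_of_le_length h]

lemma pos_length (z : List (Tok S)) : pos z z.length = npos z := by
  unfold pos npos; rw [List.take_length]

lemma npos_append (z : List (Tok S)) (a : Tok S) :
    npos (z ++ [a]) = npos z + a.2.2 := by
  unfold npos; simp

lemma tapeOf_append (z : List (Tok S)) (a : Tok S) (p : ℤ) :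
    tapeOf (z ++ [a]) p = if p = npos z then a.2.1 else tapeOf z p := by
  classical
  unfold tapeOf
  simp only [List.length_append, List.length_singleton]
  by_cases hp : p = npos z
  · subst hp
    have hmem : z.length ∈ (Finset.range (z.length + 1)).filter
        (fun i => pos (z ++ [a]) i = npos z) := by
      simp [Finset.mem_filter, pos_append_le z [a] (le_refl z.length), pos_length]
    have hne : ((Finset.range (z.length + 1)).filter
        (fun i => pos (z ++ [a]) i = npos z)).Nonempty := ⟨z.length, hmem⟩
    rw [dif_pos hne, if_pos rfl]
    have hmax : ((Finset.range (z.length + 1)).filter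
        (fun i => pos (z ++ [a]) i = npos z)).max' hne = z.length := by
      refine le_antisymm ?_ (Finset.le_max' _ _ hmem)
      have := Finset.max'_mem _ hne
      simp only [Finset.mem_filter, Finset.mem_range] at this
      omega
    rw [hmax, List.getD_eq_getElem _ _ (by simp),
      List.getElem_concat_length (l := z) (a := a) (i := z.length) rfl]
  · rw [if_neg hp]
    have hset : (Finset.range (z.length + 1)).filter (fun i => pos (z ++ [a]) i = p)
        = (Finset.range z.length).filter (fun i => pos z i = p) := by
      ext i
      simp only [Finset.mem_filter, Finset.mem_range]
      constructor
      · rintro ⟨hi, hpi⟩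
        rcases Nat.lt_succ_iff_lt_or_eq.mp hi with hi' | rfl
        · exact ⟨hi', by rwa [pos_append_le z [a] hi'.le] at hpi⟩
        · exact absurd hpi (by rw [pos_append_le z [a] (le_refl _), pos_length]; exact fun h => hp h.symm)
      · rintro ⟨hi, hpi⟩
        exact ⟨hi.trans (Nat.lt_succ_self z.length), by rwa [pos_append_le z [a] hi.le]⟩
    simp only [hset]
    by_cases h : ((Finset.range z.length).filter (fun i => pos z i = p)).Nonempty
    · rw [dif_pos h, dif_pos h]
      have hlt : ((Finset.range z.length).filter (fun i => pos z i = p)).max' h < z.length := by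
        have := Finset.max'_mem _ h
        simp only [Finset.mem_filter, Finset.mem_range] at this
        exact this.1
      rw [List.getD_append _ _ _ _ hlt]
    · rw [dif_neg h, dif_neg h]

lemma pos_const_one (z : List (Tok S)) (hz : ∀ a ∈ z, a.2.2 = 1) (i : ℕ) :
    pos z i = min i z.length := by
  unfold pos
  have h1 : ∀ a ∈ z.take i, a.2.2 = (1 : ℤ) :=
    fun a ha => hz a (List.mem_of_mem_take ha)
  rw [List.map_congr_left h1, List.map_const', List.sum_replicate,
    List.length_take]
  simp

lemma pre_length (ω : List Bool) : (pre (S := S) ω).length = ω.length + 1 := by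
  simp [pre]

lemma pre_moves (ω : List Bool) : ∀ a ∈ pre (S := S) ω, a.2.2 = 1 := by
  intro a ha
  simp only [pre, List.mem_cons, List.mem_map] at ha
  rcases ha with rfl | ⟨b, _, rfl⟩ <;> rfl

lemma pre_states (ω : List Bool) : ∀ a ∈ pre (S := S) ω, a.1 = 0 := by
  intro a ha
  simp only [pre, List.mem_cons, List.mem_map] at ha
  rcases ha with rfl | ⟨b, _, rfl⟩ <;> rfl

lemma pos_pre (ω : List Bool) (i : ℕ) (h : i ≤ ω.length + 1) :
    pos (pre (S := S) ω) i = i := by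
  rw [pos_const_one _ (pre_moves ω), pre_length]
  simp [Nat.min_eq_left h]

lemma npos_pre (ω : List Bool) : npos (pre (S := S) ω) = (ω.length : ℤ) + 1 := by
  rw [← pos_length, pre_length, pos_pre ω _ (le_refl _)]
  push_cast; ring

lemma tapeOf_pre (ω : List Bool) (p : ℤ) :
    tapeOf (pre (S := S) ω) p = initTape ω p := by
  classical
  unfold tapeOf initTape
  rw [pre_length]
  have hposi : ∀ i ∈ Finset.range (ω.length + 1),
      pos (pre (S := S) ω) i = (i : ℤ) := by
    intro i hi
    exact pos_pre ω i (by have := Finset.mem_range.mp hi; omega)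
  by_cases hp : 0 ≤ p ∧ p ≤ (ω.length : ℤ)
  · have hmem : p.toNat ∈ (Finset.range (ω.length + 1)).filter
        (fun i => pos (pre (S := S) ω) i = p) := by
      have h1 : p.toNat < ω.length + 1 := by omega
      simp only [Finset.mem_filter, Finset.mem_range]
      exact ⟨h1, by rw [hposi _ (Finset.mem_range.mpr h1)]; omega⟩
    have hne : ((Finset.range (ω.length + 1)).filter
        (fun i => pos (pre (S := S) ω) i = p)).Nonempty := ⟨_, hmem⟩
    rw [dif_pos hne]
    have hmax : ((Finset.range (ω.length + 1)).filter
        (fun i => pos (pre (S := S) ω) i = p)).max' hne = p.toNat := by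
      refine le_antisymm ?_ (Finset.le_max' _ _ hmem)
      have hm := Finset.max'_mem _ hne
      simp only [Finset.mem_filter, Finset.mem_range] at hm
      have := hposi _ (Finset.mem_range.mpr hm.1)
      rw [this] at hm
      omega
    rw [hmax]
    rcases eq_or_lt_of_le hp.1 with h0 | h0
    · -- p = 0 : BOS token, symbol none
      have : p = 0 := h0.symm
      subst this
      simp [pre]
    · -- 1 ≤ p
      have h1 : 1 ≤ p := h0
      have hlt : (p - 1).toNat < ω.length := by omega
      have htn : p.toNat = (p - 1).toNat + 1 := by omega
      rw [if_pos ⟨h1, hp.2⟩, htn]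
      show ((ω.map fun b => ((0 : Fin S), some b, (1 : ℤ))).getD (p-1).toNat default).2.1 = _
      rw [List.getD_eq_getElem _ _ (by simpa using hlt),
        List.getD_eq_getElem _ _ hlt]
      simp
  · have hemp : ¬ ((Finset.range (ω.length + 1)).filter
        (fun i => pos (pre (S := S) ω) i = p)).Nonempty := by
      rintro ⟨i, hi⟩
      simp only [Finset.mem_filter, Finset.mem_range] at hi
      rw [hposi _ (Finset.mem_range.mpr hi.1)] at hi
      omega
    rw [dif_neg hemp, if_neg (by omega)]

lemma getLastD_state (l : List (Tok S)) (x : Tok S) (hx : x.1 = 0)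
    (hl : ∀ a ∈ l, a.1 = 0) : (l.getLastD x).1 = 0 := by
  induction l generalizing x with
  | nil => exact hx
  | cons a l ih =>
    rw [List.getLastD_cons]
    exact ih a (hl a (by simp)) (fun b hb => hl b (by simp [hb]))

lemma pre_getLastD (ω : List Bool) :
    ((pre (S := S) ω).getLastD default).1 = 0 := by
  rcases hpre : pre (S := S) ω with _ | ⟨a, l⟩
  · simp [pre] at hpre
  · rw [List.getLastD_cons]
    have hs := pre_states (S := S) ω
    rw [hpre] at hs
    exact getLastD_state l a (hs a (by simp)) (fun b hb => hs b (by simp [hb]))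

variable (τ : Fin S × Option Bool → Fin S × Bool × ℤ)

def hist (ω : List Bool) (t : ℕ) : List (Tok S) :=
  pre ω ++ (List.range t).map (fun u => toTok (tmEmit τ ω u))

lemma hist_zero (ω : List Bool) : hist τ ω 0 = pre ω := by simp [hist]

lemma hist_succ (ω : List Bool) (t : ℕ) :
    hist τ ω (t + 1) = hist τ ω t ++ [toTok (tmEmit τ ω t)] := by
  simp [hist, List.range_succ]

lemma tmRun_succ (ω : List Bool) (t : ℕ) :
    tmRun τ ω (t + 1) = tmStep τ (tmRun τ ω t) := by
  unfold tmRun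
  rw [Function.iterate_succ_apply']

lemma inv (ω : List Bool) (t : ℕ) :
    npos (hist τ ω t) = (tmRun τ ω t).2.1 ∧
    ((hist τ ω t).getLastD default).1 = (tmRun τ ω t).2.2 ∧
    ∀ p, tapeOf (hist τ ω t) p = (tmRun τ ω t).1 p := by
  induction t with
  | zero =>
    rw [hist_zero]
    exact ⟨npos_pre ω, pre_getLastD ω, tapeOf_pre ω⟩
  | succ t ih =>
    obtain ⟨h1, h2, h3⟩ := ih
    have hemit : tmEmit τ ω t
        = τ ((tmRun τ ω t).2.2, (tmRun τ ω t).1 (tmRun τ ω t).2.1) := rfl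
    rw [hist_succ, tmRun_succ]
    refine ⟨?_, ?_, ?_⟩
    · rw [npos_append, h1]
      simp [tmStep, toTok, hemit]
    · rw [List.getLastD_concat]
      simp [tmStep, toTok, hemit]
    · intro p
      rw [tapeOf_append, h1]
      show _ = Function.update (tmRun τ ω t).1 (tmRun τ ω t).2.1
        (some (τ ((tmRun τ ω t).2.2, (tmRun τ ω t).1 (tmRun τ ω t).2.1)).2.1) p
      rw [Function.update_apply]
      by_cases hp : p = (tmRun τ ω t).2.1
      · rw [if_pos hp, if_pos hp, hemit]; rfl
      · rw [if_neg hp, if_neg hp, h3]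

lemma fTau_hist (ω : List Bool) (t : ℕ) :
    fTau τ (hist τ ω t) = toTok (tmEmit τ ω t) := by
  obtain ⟨h1, h2, h3⟩ := inv τ ω t
  unfold fTau
  rw [readSym_eq, h1, h2, h3]
  rfl

lemma iterate_hist (ω : List Bool) (t : ℕ) :
    (applyAppend (fTau τ))^[t] (pre ω) = hist τ ω t := by
  induction t with
  | zero => simp [hist_zero]
  | succ t ih =>
    rw [Function.iterate_succ_apply', ih, applyAppend, fTau_hist, hist_succ]

end Aux

/-- iterating `f_τ` for `T` steps starting from `Pre(ω)` produces at
step `t` exactly the token `(s_t, a_t, b_t)` of the run of the machine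
`⟨S,T,τ⟩` on `ω`; in particular the symbol component of the final token is the
machine's output `g_{⟨S,T,τ⟩}(ω)`. -/
theorem fTau_simulates_TM (S : ℕ) [NeZero S]
    (τ : Fin S × Option Bool → Fin S × Bool × ℤ)
    (hmv : ∀ p, (τ p).2.2 = -1 ∨ (τ p).2.2 = 0 ∨ (τ p).2.2 = 1)
    (ω : List Bool) (T : ℕ) :
    (applyAppend (fTau τ))^[T] (pre ω) =
      pre ω ++ (List.range T).map (fun t => toTok (tmEmit τ ω t)) ∧
    (1 ≤ T →
      (((applyAppend (fTau τ))^[T] (pre (S := S) ω)).getLastD default).2.1 =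
        some (tmEmit τ ω (T - 1)).2.1) := by
  refine ⟨iterate_hist τ ω T, fun hT => ?_⟩
  rw [iterate_hist τ ω T]
  obtain ⟨t, rfl⟩ : ∃ t, T = t + 1 := ⟨T - 1, by omega⟩
  rw [hist_succ, List.getLastD_concat]
  simp [toTok]
end
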